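/- Let n ≥ 4 and let each odd vertex of the diamond D_n be independently closed with probability p. Let F_n be the event that each odd row of the top-right quadrant Q contains a closed vertex ⟨i,j⟩ with i ∉ {1, 2n−1}, and G_n the event that the rightmost column of Q contains a closed vertex. Then P(F_n ∩ G_n) ≥ 1 − (n+1)(1−p)^{n−2}. -/

import Mathlib

open MeasureTheory
open scoped ENNReal

/-- The top-right quadrant `Q` of the diamond `D_n`: vertices of `ℤ²` with
column index `i = u.1 + u.2 ∈ [1, 2n-1]` and row index
`j = u.2 - u.1 ∈ [0, 2n-1]`. -/
def quadrant (n : ℕ) : Set (ℤ × ℤ) :=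
  {u | 1 ≤ u.1 + u.2 ∧ u.1 + u.2 ≤ 2 * n - 1 ∧ 0 ≤ u.2 - u.1 ∧ u.2 - u.1 ≤ 2 * n - 1}

/-- The inner odd vertices of the odd row `j = 2m+1`: columns `3, 5, …, 2n-3`. -/
def rowSet (n m : ℕ) : Finset (ℤ × ℤ) :=
  (Finset.Icc 1 (n - 2)).image (fun k : ℕ => ((k : ℤ) - m, (k : ℤ) + m + 1))

/-- Some odd vertices of the rightmost column `i = 2n-1`. -/
def colSet (n : ℕ) : Finset (ℤ × ℤ) :=
  (Finset.range (n - 2)).image (fun m : ℕ => ((n : ℤ) - 1 - m, (n : ℤ) + m))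

/-- Let each odd vertex of the diamond `D_n` (`n ≥ 4`) be
independently closed with probability `p` (closedness indicators `C u`).  Let
`F_n` be the event that every odd row of the quadrant `Q` contains a closed
vertex whose column index is neither `1` nor `2n-1`, and `G_n` the event that
the rightmost column of `Q` contains a closed vertex.  Then
`P(F_n ∩ G_n) ≥ 1 - (n+1)(1-p)^(n-2)`. -/
theorem quadrant_events_prob_bound
    {Ω : Type*} [MeasurableSpace Ω] (μ : Measure Ω) [IsProbabilityMeasure μ]
    (n : ℕ) (hn : 4 ≤ n) (p : ℝ) (hp0 : 0 ≤ p) (hp1 : p ≤ 1)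
    (C : ℤ × ℤ → Ω → Bool) (hmeas : ∀ u, Measurable (C u))
    (hindep : ProbabilityTheory.iIndepFun C μ)
    (hprob : ∀ u : ℤ × ℤ, Odd (u.1 + u.2) → μ {ω | C u ω = true} = ENNReal.ofReal p) :
    ENNReal.ofReal (1 - (n + 1 : ℝ) * (1 - p) ^ (n - 2)) ≤
      μ ({ω | ∀ j : ℤ, Odd j → 1 ≤ j → j ≤ 2 * n - 1 →
            ∃ u ∈ quadrant n, u.2 - u.1 = j ∧ C u ω = true ∧
              u.1 + u.2 ≠ 1 ∧ u.1 + u.2 ≠ 2 * n - 1}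
          ∩ {ω | ∃ u ∈ quadrant n, u.1 + u.2 = 2 * n - 1 ∧ C u ω = true}) := by
  classical
  set r : ℝ≥0∞ := ENNReal.ofReal (1 - p) with hrdef
  -- probability that a single odd vertex is open
  have hfalse : ∀ u : ℤ × ℤ, Odd (u.1 + u.2) → μ {ω | C u ω = false} = r := by
    intro u hu
    have h1 : {ω | C u ω = false} = {ω | C u ω = true}ᶜ := by
      ext ω; simp
    have h2 : MeasurableSet {ω | C u ω = true} :=
      (hmeas u) (measurableSet_singleton true)
    rw [h1, prob_compl_eq_one_sub h2, hprob u hu, hrdef,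
      ENNReal.ofReal_sub _ hp0, ENNReal.ofReal_one]
  -- probability that a finite set of odd vertices is all open
  have hprodF : ∀ s : Finset (ℤ × ℤ), (∀ u ∈ s, Odd (u.1 + u.2)) →
      μ (⋂ u ∈ s, {ω | C u ω = false}) = r ^ s.card := by
    intro s hs
    rw [hindep.meas_biInter (S := s) (s := fun u => {ω | C u ω = false})
      (fun u _ => ⟨{false}, measurableSet_singleton false, rfl⟩)]
    rw [Finset.prod_congr rfl (fun u hu => hfalse u (hs u hu)), Finset.prod_const]
  -- the bad events
  set Bad : ℕ → Set Ω := fun m => ⋂ u ∈ rowSet n m, {ω | C u ω = false} with hBad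
  set BadC : Set Ω := ⋂ u ∈ colSet n, {ω | C u ω = false} with hBadC
  have hBadRow : ∀ m : ℕ, μ (Bad m) = r ^ (n - 2) := by
    intro m
    have hinj : Function.Injective (fun k : ℕ => ((k : ℤ) - m, (k : ℤ) + m + 1)) := by
      intro a b hab
      have := congrArg Prod.fst hab
      simp only at this
      omega
    have hcard : (rowSet n m).card = n - 2 := by
      rw [rowSet, Finset.card_image_of_injective _ hinj, Nat.card_Icc]
      omega
    rw [hBad]
    rw [hprodF _ ?_, hcard]
    intro u hu
    simp only [rowSet, Finset.mem_image] at hu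
    obtain ⟨k, -, rfl⟩ := hu
    exact ⟨(k : ℤ), by push_cast; ring⟩
  have hBadColMeas : μ BadC = r ^ (n - 2) := by
    have hinj : Function.Injective (fun m : ℕ => ((n : ℤ) - 1 - m, (n : ℤ) + m)) := by
      intro a b hab
      have := congrArg Prod.snd hab
      simp only at this
      omega
    have hcard : (colSet n).card = n - 2 := by
      rw [colSet, Finset.card_image_of_injective _ hinj, Finset.card_range]
    rw [hBadC]
    rw [hprodF _ ?_, hcard]
    intro u hu
    simp only [colSet, Finset.mem_image] at hu
    obtain ⟨m, -, rfl⟩ := hu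
    exact ⟨(n : ℤ) - 1, by push_cast; ring⟩
  set F : Set Ω := {ω | ∀ j : ℤ, Odd j → 1 ≤ j → j ≤ 2 * n - 1 →
            ∃ u ∈ quadrant n, u.2 - u.1 = j ∧ C u ω = true ∧
              u.1 + u.2 ≠ 1 ∧ u.1 + u.2 ≠ 2 * n - 1} with hFdef
  set G : Set Ω := {ω | ∃ u ∈ quadrant n, u.1 + u.2 = 2 * n - 1 ∧ C u ω = true} with hGdef
  -- union bound inclusion
  have hsub : (F ∩ G)ᶜ ⊆ (⋃ m ∈ Finset.range n, Bad m) ∪ BadC := by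
    intro ω hω
    rw [Set.mem_compl_iff, Set.mem_inter_iff, not_and_or] at hω
    rcases hω with hF | hG
    · left
      rw [hFdef, Set.mem_setOf_eq] at hF
      push_neg at hF
      obtain ⟨j, hjodd, hj1, hj2, hall⟩ := hF
      obtain ⟨c, hc⟩ := hjodd
      have hc0 : 0 ≤ c := by omega
      have hcn : c < (n : ℤ) := by omega
      refine Set.mem_iUnion₂.mpr ⟨c.toNat, Finset.mem_range.mpr (by omega), ?_⟩
      rw [hBad]
      refine Set.mem_iInter₂.mpr ?_
      intro u hu
      simp only [rowSet, Finset.mem_image, Finset.mem_Icc] at hu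
      obtain ⟨k, hk, rfl⟩ := hu
      have hm : ((c.toNat : ℕ) : ℤ) = c := Int.toNat_of_nonneg hc0
      have hq : ((k : ℤ) - c.toNat, (k : ℤ) + c.toNat + 1) ∈ quadrant n := by
        refine ⟨?_, ?_, ?_, ?_⟩ <;> simp only <;> omega
      have hdiff : ((k : ℤ) + c.toNat + 1) - ((k : ℤ) - c.toNat) = j := by omega
      have h := hall _ hq hdiff
      simp only [Set.mem_setOf_eq]
      cases hb : C ((k : ℤ) - c.toNat, (k : ℤ) + c.toNat + 1) ω with
      | false => rfl
      | true =>
        exfalso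
        have h2 := h hb (by simp only; omega)
        simp only at h2
        omega
    · right
      rw [hGdef, Set.mem_setOf_eq] at hG
      push_neg at hG
      rw [hBadC]
      refine Set.mem_iInter₂.mpr ?_
      intro u hu
      simp only [colSet, Finset.mem_image, Finset.mem_range] at hu
      obtain ⟨m, hm, rfl⟩ := hu
      have hq : ((n : ℤ) - 1 - m, (n : ℤ) + m) ∈ quadrant n := by
        refine ⟨?_, ?_, ?_, ?_⟩ <;> simp only <;> omega
      have h := hG _ hq (by simp only; ring)
      simp only [Set.mem_setOf_eq]
      cases hb : C ((n : ℤ) - 1 - m, (n : ℤ) + m) ω with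
      | false => rfl
      | true => exact absurd hb h
  -- union bound
  have hbound : μ ((F ∩ G)ᶜ) ≤ ((n : ℝ≥0∞) + 1) * r ^ (n - 2) := by
    calc μ ((F ∩ G)ᶜ) ≤ μ ((⋃ m ∈ Finset.range n, Bad m) ∪ BadC) := measure_mono hsub
      _ ≤ μ (⋃ m ∈ Finset.range n, Bad m) + μ BadC := measure_union_le _ _
      _ ≤ (∑ m ∈ Finset.range n, μ (Bad m)) + μ BadC :=
          add_le_add (measure_biUnion_finset_le _ _) le_rfl
      _ = (n : ℝ≥0∞) * r ^ (n - 2) + r ^ (n - 2) := by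
          rw [Finset.sum_congr rfl (fun m _ => hBadRow m), Finset.sum_const,
            Finset.card_range, hBadColMeas, nsmul_eq_mul]
      _ = ((n : ℝ≥0∞) + 1) * r ^ (n - 2) := by ring
  have hb0 : (0 : ℝ) ≤ (n + 1 : ℝ) * (1 - p) ^ (n - 2) :=
    mul_nonneg (by positivity) (pow_nonneg (by linarith) _)
  have hofb : ENNReal.ofReal ((n + 1 : ℝ) * (1 - p) ^ (n - 2)) =
      ((n : ℝ≥0∞) + 1) * r ^ (n - 2) := by
    rw [ENNReal.ofReal_mul (by positivity), ENNReal.ofReal_pow (by linarith), hrdef]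
    congr 1
    rw [show ((n : ℝ) + 1) = (((n + 1 : ℕ) : ℝ)) by push_cast; ring,
      ENNReal.ofReal_natCast]
    push_cast; ring
  have hone : (1 : ℝ≥0∞) ≤ μ (F ∩ G) + μ ((F ∩ G)ᶜ) := by
    calc (1 : ℝ≥0∞) = μ Set.univ := measure_univ.symm
      _ = μ ((F ∩ G) ∪ (F ∩ G)ᶜ) := by rw [Set.union_compl_self]
      _ ≤ μ (F ∩ G) + μ ((F ∩ G)ᶜ) := measure_union_le _ _
  calc ENNReal.ofReal (1 - (n + 1 : ℝ) * (1 - p) ^ (n - 2))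
      = 1 - ENNReal.ofReal ((n + 1 : ℝ) * (1 - p) ^ (n - 2)) := by
        rw [ENNReal.ofReal_sub _ hb0, ENNReal.ofReal_one]
    _ ≤ 1 - μ ((F ∩ G)ᶜ) := tsub_le_tsub_left (hofb ▸ hbound) 1
    _ ≤ μ (F ∩ G) := tsub_le_iff_right.mpr hone
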